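/- For n ≥ 2 and (s₁,…,s_{n-1},p) ∈ ℂⁿ, the point (s₁,…,s_{n-1},p) belongs to πₙ(𝕋ⁿ) if and only if |p| = 1 and there exists (c₁,…,c_{n-1}) ∈ π_{n-1}(𝕋^{n-1}) such that sᵢ = cᵢ + conj(c_{n-i})·p for every i = 1,…,n-1. -/

import Mathlib

open Finset

/-- The `k`-th elementary symmetric polynomial of `z₁, …, zₙ`. -/
noncomputable def esymC (n k : ℕ) (z : Fin n → ℂ) : ℂ :=
  ∑ t ∈ Finset.powersetCard k (Finset.univ : Finset (Fin n)), ∏ j ∈ t, z j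

/-- The symmetrization map `πₙ(z) = (e₁(z), …, eₙ(z))`. -/
noncomputable def symMap (n : ℕ) (z : Fin n → ℂ) : Fin n → ℂ :=
  fun k => esymC n (k.1 + 1) z

/-- The symmetrization of the `n`-torus, `πₙ(𝕋ⁿ)` (the distinguished boundary
`bΓₙ`). -/
noncomputable def symTorus (n : ℕ) : Set (Fin n → ℂ) :=
  {x | ∃ z : Fin n → ℂ, (∀ j, ‖z j‖ = 1) ∧ symMap n z = x}

lemma esymC_eq_esymm (n k : ℕ) (z : Fin n → ℂ) :
    esymC n k z = ((Finset.univ.val.map z).esymm k) := by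
  rw [esymC, Finset.esymm_map_val]

lemma Multiset.esymm_cons' (a : ℂ) (s : Multiset ℂ) (k : ℕ) :
    (a ::ₘ s).esymm (k+1) = s.esymm (k+1) + a * s.esymm k := by
  simp only [Multiset.esymm, Multiset.powersetCard_cons, Multiset.map_add, Multiset.sum_add,
    Multiset.map_map, Function.comp_def, Multiset.prod_cons]
  rw [← Multiset.sum_map_mul_left]

lemma map_univ_succ (m : ℕ) (z : Fin (m+1) → ℂ) :
    (Finset.univ.val.map z) = z (Fin.last m) ::ₘ (Finset.univ.val.map (z ∘ Fin.castSucc)) := by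
  rw [Fin.univ_castSuccEmb, Finset.cons_val, Multiset.map_cons, Finset.map_val,
    Multiset.map_map]
  rfl

lemma esymC_succ (m k : ℕ) (z : Fin (m+1) → ℂ) :
    esymC (m+1) (k+1) z =
      esymC m (k+1) (z ∘ Fin.castSucc) + z (Fin.last m) * esymC m k (z ∘ Fin.castSucc) := by
  rw [esymC_eq_esymm, esymC_eq_esymm, esymC_eq_esymm, map_univ_succ, Multiset.esymm_cons']

lemma esymC_top (m : ℕ) (z : Fin m → ℂ) : esymC m m z = ∏ j, z j := by
  have h : Finset.powersetCard m (univ : Finset (Fin m)) = {univ} := by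
    simpa using Finset.powersetCard_self (univ : Finset (Fin m))
  rw [esymC, h, Finset.sum_singleton]

lemma esymC_conj_mul (m k : ℕ) (hk : k ≤ m) (w : Fin m → ℂ)
    (hw : ∀ j, ‖w j‖ = 1) :
    (starRingEnd ℂ) (esymC m k w) * ∏ j, w j = esymC m (m - k) w := by
  have hconj : ∀ j, (starRingEnd ℂ) (w j) * w j = 1 := fun j => by
    rw [mul_comm, Complex.mul_conj, ← Complex.ofReal_one]
    norm_cast
    rw [Complex.normSq_eq_norm_sq, hw j, one_pow]
  rw [esymC, esymC, map_sum, Finset.sum_mul]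
  refine Finset.sum_nbij' (fun t => tᶜ) (fun t => tᶜ) ?_ ?_ ?_ ?_ ?_
  · intro t ht
    rw [Finset.mem_powersetCard_univ] at ht ⊢
    rw [Finset.card_compl, ht, Fintype.card_fin]
  · intro t ht
    rw [Finset.mem_powersetCard_univ] at ht ⊢
    rw [Finset.card_compl, ht, Fintype.card_fin, Nat.sub_sub_self hk]
  · intro t _; simp
  · intro t _; simp
  · intro t ht
    rw [← Finset.prod_mul_prod_compl t w, map_prod, ← mul_assoc, ← Finset.prod_mul_distrib]
    simp [hconj]

lemma prod_abs_one (m : ℕ) (w : Fin m → ℂ) (hw : ∀ j, ‖w j‖ = 1) :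
    ‖∏ j, w j‖ = 1 := by
  rw [Complex.norm_prod]
  simp [hw]

lemma mul_conj_one_of_abs {a : ℂ} (ha : ‖a‖ = 1) :
    a * (starRingEnd ℂ) a = 1 := by
  rw [Complex.mul_conj, ← Complex.ofReal_one]
  norm_cast
  rw [Complex.normSq_eq_norm_sq, ha, one_pow]

/-- For `n = m + 1 ≥ 2`, the point `(s₁, …, s_{n-1}, p)` (here
`x i.castSucc = s_{i+1}` for `i : Fin m` and `x (Fin.last m) = p`) lies in
`πₙ(𝕋ⁿ)` iff `|p| = 1` and there is `(c₁, …, c_{n-1}) ∈ π_{n-1}(𝕋^{n-1})` with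
`sᵢ = cᵢ + conj(c_{n-i}) p` for all `i = 1, …, n-1` (note `c i.rev = c_{n-i}`
when `c i = c_{i+1}`). -/
theorem mem_symTorus_iff_exists_rep (m : ℕ) (hm : 1 ≤ m) (x : Fin (m + 1) → ℂ) :
    x ∈ symTorus (m + 1) ↔
      ‖x (Fin.last m)‖ = 1 ∧
        ∃ c : Fin m → ℂ, c ∈ symTorus m ∧
          ∀ i : Fin m,
            x i.castSucc = c i + (starRingEnd ℂ) (c i.rev) * x (Fin.last m) := by
  constructor
  · rintro ⟨z, hz, rfl⟩
    set w : Fin m → ℂ := z ∘ Fin.castSucc with hwdef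
    have hwj : ∀ j, ‖w j‖ = 1 := fun j => hz _
    have hlastval : symMap (m+1) z (Fin.last m) = z (Fin.last m) * ∏ j, w j := by
      show esymC (m+1) (m + 1) z = _
      rw [esymC_top, Fin.prod_univ_castSucc, mul_comm]
      rfl
    refine ⟨?_, symMap m w, ⟨w, hwj, rfl⟩, ?_⟩
    · rw [hlastval, norm_mul, hz, prod_abs_one m w hwj, one_mul]
    · intro i
      have hi1 : i.rev.1 + 1 = m - i.1 := by
        have := i.2
        simp only [Fin.val_rev]
        omega
      have hkey : (starRingEnd ℂ) (esymC m (m - i.1) w) * ∏ j, w j = esymC m i.1 w := by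
        rw [esymC_conj_mul m (m - i.1) (Nat.sub_le m i.1) w hwj,
          Nat.sub_sub_self (le_of_lt i.2)]
      have hcast : symMap (m+1) z i.castSucc = esymC (m+1) (i.1 + 1) z := by
        simp [symMap]
      rw [hcast, esymC_succ, hlastval]
      show esymC m (i.1+1) w + z (Fin.last m) * esymC m i.1 w
        = esymC m (i.1+1) w + (starRingEnd ℂ) (esymC m (i.rev.1 + 1) w)
            * (z (Fin.last m) * ∏ j, w j)
      rw [hi1, ← hkey]
      ring
  · rintro ⟨hp, c, ⟨w, hwj, rfl⟩, hrel⟩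
    set p := x (Fin.last m) with hpdef
    set z : Fin (m+1) → ℂ := Fin.snoc w (p * (starRingEnd ℂ) (∏ j, w j)) with hzdef
    have hzc : z ∘ Fin.castSucc = w := by
      funext j; simp [hzdef]
    have hzl : z (Fin.last m) = p * (starRingEnd ℂ) (∏ j, w j) := by simp [hzdef]
    have hprodconj : (∏ j, w j) * (starRingEnd ℂ) (∏ j, w j) = 1 :=
      mul_conj_one_of_abs (prod_abs_one m w hwj)
    refine ⟨z, ?_, ?_⟩
    · intro j
      refine Fin.lastCases ?_ ?_ j
      · rw [hzl, norm_mul, hp, Complex.norm_conj, prod_abs_one m w hwj, one_mul]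
      · intro i
        have : z i.castSucc = w i := by rw [← hzc]; rfl
        rw [this]; exact hwj i
    · funext k
      refine Fin.lastCases ?_ ?_ k
      · show esymC (m+1) (m + 1) z = p
        rw [esymC_top, Fin.prod_univ_castSucc, hzl]
        have : (∏ i : Fin m, z i.castSucc) = ∏ j, w j := by
          rw [← hzc]; rfl
        rw [this]
        calc (∏ j, w j) * (p * (starRingEnd ℂ) (∏ j, w j))
            = p * ((∏ j, w j) * (starRingEnd ℂ) (∏ j, w j)) := by ring
          _ = p := by rw [hprodconj, mul_one]
      · intro i
        have hi1 : i.rev.1 + 1 = m - i.1 := by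
          have := i.2
          simp only [Fin.val_rev]
          omega
        have hkey : (starRingEnd ℂ) (esymC m (m - i.1) w) * ∏ j, w j = esymC m i.1 w := by
          rw [esymC_conj_mul m (m - i.1) (Nat.sub_le m i.1) w hwj,
            Nat.sub_sub_self (le_of_lt i.2)]
        have hcast : symMap (m+1) z i.castSucc = esymC (m+1) (i.1 + 1) z := by
          simp [symMap]
        rw [hcast, esymC_succ, hzc, hrel i, hzl]
        show esymC m (i.1+1) w + p * (starRingEnd ℂ) (∏ j, w j) * esymC m i.1 w
          = esymC m (i.1+1) w + (starRingEnd ℂ) (esymC m (i.rev.1+1) w) * p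
        rw [hi1, ← hkey]
        calc esymC m (i.1+1) w + p * (starRingEnd ℂ) (∏ j, w j)
              * ((starRingEnd ℂ) (esymC m (m - i.1) w) * ∏ j, w j)
            = esymC m (i.1+1) w + (starRingEnd ℂ) (esymC m (m - i.1) w)
              * ((∏ j, w j) * (starRingEnd ℂ) (∏ j, w j)) * p := by ring
          _ = _ := by rw [hprodconj]; ring
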